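/- Let H and Λ be real symmetric positive semidefinite n×n matrices, let θ₀, θ̂ ∈ ℝⁿ, set Δθ = θ̂ − θ₀, and assume Δθᵀ (H + Λ) Δθ > 0. Define Q : ℝⁿ → ℝ by Q(θ) = ½·(θ − θ̂)ᵀ H (θ − θ̂) + ½·(θ − θ₀)ᵀ Λ (θ − θ₀), and set λ* = (Δθᵀ H Δθ)/(Δθᵀ (H + Λ) Δθ). Then λ* ∈ [0,1] and for every λ ∈ ℝ with λ ≠ λ*, Q(θ₀ + λ*·Δθ) < Q(θ₀ + λ·Δθ). -/

import Mathlib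

open Matrix

/-- Vector-level form of Eq. 17: the closed-form merging coefficient
uniquely minimizes the Laplace-approximated MAP objective along the
merging path. -/
theorem stmt_8 {n : ℕ} (H Λ : Matrix (Fin n) (Fin n) ℝ)
    (hH : H.PosSemidef) (hΛ : Λ.PosSemidef)
    (θ₀ θh : Fin n → ℝ)
    (hpos : 0 < (θh - θ₀) ⬝ᵥ (H + Λ) *ᵥ (θh - θ₀))
    (Q : (Fin n → ℝ) → ℝ)
    (hQ : ∀ θ : Fin n → ℝ,
      Q θ = (1 / 2) * ((θ - θh) ⬝ᵥ H *ᵥ (θ - θh))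
          + (1 / 2) * ((θ - θ₀) ⬝ᵥ Λ *ᵥ (θ - θ₀)))
    (ls : ℝ)
    (hls : ls = ((θh - θ₀) ⬝ᵥ H *ᵥ (θh - θ₀))
        / ((θh - θ₀) ⬝ᵥ (H + Λ) *ᵥ (θh - θ₀))) :
    ls ∈ Set.Icc (0 : ℝ) 1 ∧
      ∀ lam : ℝ, lam ≠ ls →
        Q (θ₀ + ls • (θh - θ₀)) < Q (θ₀ + lam • (θh - θ₀)) := by
  set Δ : Fin n → ℝ := θh - θ₀ with hΔ
  set a : ℝ := Δ ⬝ᵥ H *ᵥ Δ with ha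
  set b : ℝ := Δ ⬝ᵥ Λ *ᵥ Δ with hb
  have hc : Δ ⬝ᵥ (H + Λ) *ᵥ Δ = a + b := by
    rw [Matrix.add_mulVec, dotProduct_add]
  rw [hc] at hpos hls
  have ha0 : 0 ≤ a := by simpa using hH.dotProduct_mulVec_nonneg Δ
  have hb0 : 0 ≤ b := by simpa using hΛ.dotProduct_mulVec_nonneg Δ
  have hpath : ∀ lam : ℝ, Q (θ₀ + lam • Δ)
      = (1/2) * a * (lam - 1)^2 + (1/2) * b * lam^2 := by
    intro lam
    have h1 : θ₀ + lam • Δ - θh = (lam - 1) • Δ := by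
      rw [hΔ]; ext i; simp [Pi.smul_apply]; ring
    have h2 : θ₀ + lam • Δ - θ₀ = lam • Δ := by
      ext i; simp
    rw [hQ, h1, h2, smul_dotProduct, Matrix.mulVec_smul, dotProduct_smul,
      smul_dotProduct, Matrix.mulVec_smul, dotProduct_smul]
    simp only [smul_eq_mul, ← ha, ← hb]
    ring
  have hlsc : ls * (a + b) = a := by
    rw [hls]; field_simp
  constructor
  · constructor
    · rw [hls]; positivity
    · rw [hls]; rw [div_le_one hpos]; linarith
  · intro lam hne
    rw [hpath, hpath]
    have hne0 : lam - ls ≠ 0 := sub_ne_zero.mpr hne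
    have hsq : 0 < (lam - ls)^2 := by positivity
    nlinarith [hsq, hpos, hlsc]
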